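/- arXiv:1911.03043 — 4 statements merged into one kernel-verified Lean document; each statement's English description precedes it below -/
import Mathlib

section
/- Let ρ be a probability measure on ℝ^d with density proportional to exp(-f(x)) where f is convex with global minimum at 0 and f(0)=0. Then for any radius r ≥ 0, the probability under ρ that ‖x‖ ≥ r is at most the probability that ‖x‖ ≥ r under a standard Gaussian N(0, σ²I_d), provided f is (1/σ²)-strongly convex. -/
open MeasureTheory Real Set
open scoped ENNReal

section TailAux
open Metric

variable {E : Type*} [NormedAddCommGroup E] [NormedSpace ℝ E] [MeasurableSpace E]
  [BorelSpace E] [FiniteDimensional ℝ E] [Nontrivial E]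

lemma polar_lintegral (μ : Measure E) [μ.IsAddHaarMeasure] {φ : E → ℝ≥0∞}
    (hφ : Measurable φ) :
    ∫⁻ x, φ x ∂μ
      = ∫⁻ p : sphere (0:E) 1 × Ioi (0:ℝ), φ ((p.2 : ℝ) • (p.1 : E))
          ∂(μ.toSphere.prod (Measure.volumeIoiPow (Module.finrank ℝ E - 1))) := by
  have hmeas : Measurable fun p : sphere (0:E) 1 × Ioi (0:ℝ) => φ ((p.2 : ℝ) • (p.1 : E)) :=
    hφ.comp ((continuous_subtype_val.comp continuous_snd).smul
      (continuous_subtype_val.comp continuous_fst)).measurable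
  have h1 : ∀ x : ({0}ᶜ : Set E),
      φ (x : E) = φ ((((homeomorphUnitSphereProd E) x).2 : ℝ) •
        (((homeomorphUnitSphereProd E) x).1 : E)) := by
    intro x
    have hx : ‖(x : E)‖ ≠ 0 := norm_ne_zero_iff.2 x.2
    simp only [homeomorphUnitSphereProd_apply_snd_coe, homeomorphUnitSphereProd_apply_fst_coe]
    rw [smul_inv_smul₀ hx]
  calc ∫⁻ x, φ x ∂μ = ∫⁻ x in ({0}ᶜ : Set E), φ x ∂μ := by
        rw [MeasureTheory.restrict_compl_singleton]
    _ = ∫⁻ x : ({0}ᶜ : Set E), φ (x : E) ∂(μ.comap (↑)) :=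
        (lintegral_subtype_comap (measurableSet_singleton 0).compl _).symm
    _ = ∫⁻ x : ({0}ᶜ : Set E),
          (fun p : sphere (0:E) 1 × Ioi (0:ℝ) => φ ((p.2 : ℝ) • (p.1 : E)))
            ((homeomorphUnitSphereProd E) x) ∂(μ.comap (↑)) := lintegral_congr h1
    _ = _ := μ.measurePreserving_homeomorphUnitSphereProd.lintegral_comp hmeas

lemma key_ineq (μ : Measure E) [μ.IsAddHaarMeasure]
    (w : ℝ → ℝ) (hw : Continuous w) (hw0 : ∀ s, 0 ≤ w s)
    (h : E → ℝ) (hh : Continuous h)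
    (hmono : ∀ (x : E), ∀ c ∈ Icc (0:ℝ) 1, h (c • x) ≤ h x)
    (r : ℝ) :
    (∫⁻ x in {x : E | r ≤ ‖x‖}, ENNReal.ofReal (w ‖x‖ * exp (-h x)) ∂μ) *
      (∫⁻ x in {x : E | r ≤ ‖x‖}ᶜ, ENNReal.ofReal (w ‖x‖) ∂μ) ≤
    (∫⁻ x in {x : E | r ≤ ‖x‖}, ENNReal.ofReal (w ‖x‖) ∂μ) *
      (∫⁻ x in {x : E | r ≤ ‖x‖}ᶜ, ENNReal.ofReal (w ‖x‖ * exp (-h x)) ∂μ) := by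
  classical
  set A : Set E := {x : E | r ≤ ‖x‖} with hA_def
  have hA : MeasurableSet A := measurableSet_le measurable_const measurable_norm
  set Ω := sphere (0:E) 1
  set I := Ioi (0:ℝ)
  set S : Measure Ω := μ.toSphere with hS
  set m : Measure I := Measure.volumeIoiPow (Module.finrank ℝ E - 1) with hm
  -- functions on the polar side
  set χ : I → ℝ≥0∞ := fun s => if r ≤ (s : ℝ) then 1 else 0 with hχ_def
  set χ' : I → ℝ≥0∞ := fun s => if r ≤ (s : ℝ) then 0 else 1 with hχ'_def
  set W : I → ℝ≥0∞ := fun s => ENNReal.ofReal (w s) with hW_def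
  set H : Ω × I → ℝ≥0∞ := fun p => ENNReal.ofReal (exp (-h ((p.2 : ℝ) • (p.1 : E)))) with hH_def
  -- measurability
  have hIset : MeasurableSet {s : I | r ≤ (s:ℝ)} :=
    measurableSet_le measurable_const measurable_subtype_coe
  have hχ : Measurable χ := Measurable.ite hIset measurable_const measurable_const
  have hχ' : Measurable χ' := Measurable.ite hIset measurable_const measurable_const
  have hW : Measurable W :=
    ENNReal.measurable_ofReal.comp (hw.comp continuous_subtype_val).measurable
  have hsmul : Continuous fun p : Ω × I => ((p.2 : ℝ) • (p.1 : E)) :=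
    (continuous_subtype_val.comp continuous_snd).smul
      (continuous_subtype_val.comp continuous_fst)
  have hH : Measurable H :=
    ENNReal.measurable_ofReal.comp
      (Real.continuous_exp.comp ((hh.comp hsmul).neg)).measurable
  have hFE : Measurable fun x : E => ENNReal.ofReal (w ‖x‖ * exp (-h x)) := by
    apply ENNReal.measurable_ofReal.comp
    exact ((hw.comp continuous_norm).mul (Real.continuous_exp.comp hh.neg)).measurable
  have hGE : Measurable fun x : E => ENNReal.ofReal (w ‖x‖) :=
    ENNReal.measurable_ofReal.comp (hw.comp continuous_norm).measurable
  have hnorm : ∀ p : Ω × I, ‖((p.2 : ℝ) • (p.1 : E))‖ = (p.2 : ℝ) := by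
    intro p
    rw [norm_smul, mem_sphere_zero_iff_norm.1 p.1.2, mul_one, Real.norm_eq_abs,
      abs_of_pos p.2.2]
  -- the four transfers
  have tIA : ∫⁻ x in A, ENNReal.ofReal (w ‖x‖ * exp (-h x)) ∂μ
      = ∫⁻ p : Ω × I, χ p.2 * (W p.2 * H p) ∂(S.prod m) := by
    rw [← lintegral_indicator hA _, polar_lintegral μ (hFE.indicator hA)]
    refine lintegral_congr fun p => ?_
    by_cases hp : r ≤ (p.2 : ℝ)
    · rw [Set.indicator_of_mem (by simpa [hA_def, hnorm p] using hp)]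
      simp only [hχ_def, hW_def, hH_def, if_pos hp, one_mul, hnorm p]
      rw [ENNReal.ofReal_mul (hw0 _)]
    · rw [Set.indicator_of_notMem (by simpa [hA_def, hnorm p] using hp)]
      simp [hχ_def, if_neg hp]
  have tIB : ∫⁻ x in Aᶜ, ENNReal.ofReal (w ‖x‖ * exp (-h x)) ∂μ
      = ∫⁻ p : Ω × I, χ' p.2 * (W p.2 * H p) ∂(S.prod m) := by
    rw [← lintegral_indicator hA.compl _, polar_lintegral μ (hFE.indicator hA.compl)]
    refine lintegral_congr fun p => ?_
    by_cases hp : r ≤ (p.2 : ℝ)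
    · rw [Set.indicator_of_notMem (by simpa [hA_def, hnorm p] using hp)]
      simp [hχ'_def, if_pos hp]
    · rw [Set.indicator_of_mem (by simpa [hA_def, hnorm p] using hp)]
      simp only [hχ'_def, hW_def, hH_def, if_neg hp, one_mul, hnorm p]
      rw [ENNReal.ofReal_mul (hw0 _)]
  have tJA : ∫⁻ x in A, ENNReal.ofReal (w ‖x‖) ∂μ
      = ∫⁻ p : Ω × I, χ p.2 * W p.2 ∂(S.prod m) := by
    rw [← lintegral_indicator hA _, polar_lintegral μ (hGE.indicator hA)]
    refine lintegral_congr fun p => ?_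
    by_cases hp : r ≤ (p.2 : ℝ)
    · rw [Set.indicator_of_mem (by simpa [hA_def, hnorm p] using hp)]
      simp [hχ_def, hW_def, if_pos hp, hnorm p]
    · rw [Set.indicator_of_notMem (by simpa [hA_def, hnorm p] using hp)]
      simp [hχ_def, if_neg hp]
  have tJB : ∫⁻ x in Aᶜ, ENNReal.ofReal (w ‖x‖) ∂μ
      = ∫⁻ p : Ω × I, χ' p.2 * W p.2 ∂(S.prod m) := by
    rw [← lintegral_indicator hA.compl _, polar_lintegral μ (hGE.indicator hA.compl)]
    refine lintegral_congr fun p => ?_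
    by_cases hp : r ≤ (p.2 : ℝ)
    · rw [Set.indicator_of_notMem (by simpa [hA_def, hnorm p] using hp)]
      simp [hχ'_def, if_pos hp]
    · rw [Set.indicator_of_mem (by simpa [hA_def, hnorm p] using hp)]
      simp [hχ'_def, hW_def, if_neg hp, hnorm p]
  rw [tIA, tIB, tJA, tJB]
  -- iterated integrals
  have hmeasIA : Measurable fun p : Ω × I => χ p.2 * (W p.2 * H p) :=
    (hχ.comp measurable_snd).mul ((hW.comp measurable_snd).mul hH)
  have hmeasIB : Measurable fun p : Ω × I => χ' p.2 * (W p.2 * H p) :=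
    (hχ'.comp measurable_snd).mul ((hW.comp measurable_snd).mul hH)
  have hmeasJA : Measurable fun p : Ω × I => χ p.2 * W p.2 :=
    (hχ.comp measurable_snd).mul (hW.comp measurable_snd)
  have hmeasJB : Measurable fun p : Ω × I => χ' p.2 * W p.2 :=
    (hχ'.comp measurable_snd).mul (hW.comp measurable_snd)
  rw [lintegral_prod _ hmeasIA.aemeasurable, lintegral_prod _ hmeasIB.aemeasurable,
    lintegral_prod _ hmeasJA.aemeasurable, lintegral_prod _ hmeasJB.aemeasurable]
  set ja : ℝ≥0∞ := ∫⁻ s, χ s * W s ∂m with hja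
  set jb : ℝ≥0∞ := ∫⁻ s, χ' s * W s ∂m with hjb
  have hconstA : (∫⁻ θ : Ω, ∫⁻ s, χ s * W s ∂m ∂S) = ja * S univ := lintegral_const _
  have hconstB : (∫⁻ θ : Ω, ∫⁻ s, χ' s * W s ∂m ∂S) = jb * S univ := lintegral_const _
  rw [hconstA, hconstB]
  set a : Ω → ℝ≥0∞ := fun θ => ∫⁻ s, χ s * (W s * H (θ, s)) ∂m with ha_def
  set b : Ω → ℝ≥0∞ := fun θ => ∫⁻ s, χ' s * (W s * H (θ, s)) ∂m with hb_def
  have ha_meas : Measurable a := hmeasIA.lintegral_prod_right'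
  have hb_meas : Measurable b := hmeasIB.lintegral_prod_right'
  -- pointwise (in θ) one-dimensional inequality
  have hpt : ∀ θ : Ω, a θ * jb ≤ ja * b θ := by
    intro θ
    have m1 : AEMeasurable (fun s : I => χ s * (W s * H (θ, s))) m := by
      apply AEMeasurable.mul hχ.aemeasurable
      apply AEMeasurable.mul hW.aemeasurable
      exact (hH.comp (measurable_prodMk_left (m := _))).aemeasurable
    have m2 : AEMeasurable (fun s : I => χ' s * (W s * H (θ, s))) m := by
      apply AEMeasurable.mul hχ'.aemeasurable
      apply AEMeasurable.mul hW.aemeasurable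
      exact (hH.comp (measurable_prodMk_left (m := _))).aemeasurable
    have m3 : AEMeasurable (fun s : I => χ s * W s) m := (hχ.mul hW).aemeasurable
    have m4 : AEMeasurable (fun s : I => χ' s * W s) m := (hχ'.mul hW).aemeasurable
    rw [ha_def, hb_def, hja, hjb, ← lintegral_prod_mul m1 m4, ← lintegral_prod_mul m3 m2]
    refine lintegral_mono fun z => ?_
    by_cases h1 : r ≤ (z.1 : ℝ)
    · by_cases h2 : r ≤ (z.2 : ℝ)
      · simp [hχ'_def, if_pos h2]
      · -- main case : z.2 < r ≤ z.1
        have hz21 : (z.2 : ℝ) ≤ (z.1 : ℝ) := le_trans (not_le.1 h2).le h1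
        have hz1 : (0:ℝ) < (z.1 : ℝ) := z.1.2
        have hz2 : (0:ℝ) < (z.2 : ℝ) := z.2.2
        have hc : ((z.2 : ℝ) / (z.1 : ℝ)) ∈ Icc (0:ℝ) 1 :=
          ⟨div_nonneg hz2.le hz1.le, (div_le_one hz1).2 hz21⟩
        have hhh : h ((z.2 : ℝ) • (θ : E)) ≤ h ((z.1 : ℝ) • (θ : E)) := by
          have := hmono ((z.1 : ℝ) • (θ : E)) _ hc
          rwa [smul_smul, div_mul_cancel₀ _ (ne_of_gt hz1)] at this
        have hHle : H (θ, z.1) ≤ H (θ, z.2) := by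
          simp only [hH_def]
          exact ENNReal.ofReal_le_ofReal (exp_le_exp.2 (neg_le_neg hhh))
        simp only [hχ_def, hχ'_def, if_pos h1, if_neg h2, one_mul]
        calc W z.1 * H (θ, z.1) * (W z.2)
            = W z.1 * (W z.2 * H (θ, z.1)) := by ring
          _ ≤ W z.1 * (W z.2 * H (θ, z.2)) :=
              mul_le_mul_right (mul_le_mul_right hHle _) _
    · simp [hχ_def, if_neg h1]
  -- combine
  calc (∫⁻ θ, a θ ∂S) * (jb * S univ) = (∫⁻ θ, a θ * jb ∂S) * S univ := by
        rw [lintegral_mul_const _ ha_meas]; ring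
    _ ≤ (∫⁻ θ, ja * b θ ∂S) * S univ :=
        mul_le_mul_left (lintegral_mono fun θ => hpt θ) _
    _ = (ja * S univ) * (∫⁻ θ, b θ ∂S) := by
        rw [lintegral_const_mul _ hb_meas]; ring

end TailAux

/-- If `ρ ∝ e^{-f}` with `f` being `(1/σ²)`-strongly convex with minimum at the origin,
then the norm tail probability of `ρ` is dominated by that of the centered Gaussian
`N(0, σ² I_d)`. -/
theorem tail_le_gaussian_tail
    {d : ℕ} (σ : ℝ) (hσ : 0 < σ)
    (f : EuclideanSpace ℝ (Fin d) → ℝ)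
    (hf : StrongConvexOn univ (1 / σ ^ 2) f)
    (hmin : ∀ x, f 0 ≤ f x) (h0 : f 0 = 0)
    (ρ ν : Measure (EuclideanSpace ℝ (Fin d)))
    [IsProbabilityMeasure ρ] [IsProbabilityMeasure ν]
    (cρ : ℝ≥0∞)
    (hρ : ρ = cρ • volume.withDensity (fun x => ENNReal.ofReal (Real.exp (-f x))))
    (cν : ℝ≥0∞)
    (hν : ν = cν • volume.withDensity
      (fun x => ENNReal.ofReal (Real.exp (-‖x‖ ^ 2 / (2 * σ ^ 2)))))
    (r : ℝ) (hr : 0 ≤ r) :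
    ρ {x | r ≤ ‖x‖} ≤ ν {x | r ≤ ‖x‖} := by
  rcases subsingleton_or_nontrivial (EuclideanSpace ℝ (Fin d)) with hsub | hnt
  · -- trivial space
    rcases eq_or_lt_of_le hr with hr0 | hr0
    · have : {x : EuclideanSpace ℝ (Fin d) | r ≤ ‖x‖} = univ :=
        eq_univ_of_forall fun x => by simpa [← hr0] using norm_nonneg x
      rw [this, measure_univ, measure_univ]
    · have : {x : EuclideanSpace ℝ (Fin d) | r ≤ ‖x‖} = ∅ := by
        refine eq_empty_iff_forall_notMem.2 fun x hx => ?_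
        have hx0 : x = 0 := Subsingleton.elim x 0
        rw [mem_setOf_eq, hx0, norm_zero] at hx
        exact absurd hx (not_le.2 hr0)
      rw [this]
      simp
  · -- main case
    set h : (EuclideanSpace ℝ (Fin d)) → ℝ := fun x => f x - 1 / σ ^ 2 / 2 * ‖x‖ ^ 2 with hh_def
    have hconv : ConvexOn ℝ univ h := strongConvexOn_iff_convex.1 hf
    have hfc : Continuous h := by
      rw [← continuousOn_univ]
      exact hconv.continuousOn isOpen_univ
    have hzero : h 0 = 0 := by simp [hh_def, h0]
    have hscale : ∀ (x : (EuclideanSpace ℝ (Fin d))), ∀ c ∈ Icc (0:ℝ) 1, h (c • x) ≤ c * h x := by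
      intro x c hc
      have := hconv.2 (mem_univ x) (mem_univ (0:(EuclideanSpace ℝ (Fin d)))) hc.1 (sub_nonneg.2 hc.2)
        (by ring : c + (1 - c) = 1)
      simpa [hzero, smul_zero, smul_eq_mul] using this
    have hQ0 : ∀ x : (EuclideanSpace ℝ (Fin d)), (0:ℝ) ≤ 1 / σ ^ 2 / 2 * ‖x‖ ^ 2 := fun x => by positivity
    have hnn : ∀ x : (EuclideanSpace ℝ (Fin d)), 0 ≤ h x := by
      intro x
      by_contra hx
      push_neg at hx
      set Q : ℝ := 1 / σ ^ 2 / 2 * ‖x‖ ^ 2 with hQdef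
      have hQ : 0 ≤ Q := hQ0 x
      have key : ∀ t : ℝ, 0 < t → t ≤ 1 → -(t * Q) ≤ h x := by
        intro t ht ht1
        have h1 : h (t • x) ≤ t * h x := hscale x t ⟨ht.le, ht1⟩
        have h2 : (0:ℝ) ≤ f (t • x) := h0 ▸ hmin (t • x)
        have h3 : h (t • x) = f (t • x) - t ^ 2 * Q := by
          simp only [hh_def, hQdef, norm_smul, Real.norm_eq_abs, mul_pow, sq_abs]
          ring
        have h4 : t * (-(t * Q)) ≤ t * h x := by nlinarith
        exact (mul_le_mul_iff_right₀ ht).1 h4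
      set t : ℝ := min 1 ((-h x) / (2 * (Q + 1))) with ht_def
      have ht0 : 0 < t := lt_min one_pos (div_pos (neg_pos.2 hx) (by positivity))
      have ht1 : t ≤ 1 := min_le_left _ _
      have h5 := key t ht0 ht1
      have h6 : t * Q ≤ (-h x) / 2 := by
        have h7 : t ≤ (-h x) / (2 * (Q + 1)) := min_le_right _ _
        have h8 := mul_le_mul_of_nonneg_right h7 hQ
        have h9 : (-h x) / (2 * (Q + 1)) * Q ≤ (-h x) / 2 := by
          rw [div_mul_eq_mul_div, div_le_div_iff₀ (by positivity) (by norm_num)]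
          nlinarith [neg_pos.2 hx, hQ]
        linarith
      clear_value t Q h
      linarith
    have hmono : ∀ (x : (EuclideanSpace ℝ (Fin d))), ∀ c ∈ Icc (0:ℝ) 1, h (c • x) ≤ h x := fun x c hc =>
      (hscale x c hc).trans (mul_le_of_le_one_left (hnn x) hc.2)
    set w : ℝ → ℝ := fun s => Real.exp (-s ^ 2 / (2 * σ ^ 2)) with hw_def
    have hw : Continuous w := by continuity
    have hw0 : ∀ s, 0 ≤ w s := fun s => (exp_pos _).le
    set Fd : (EuclideanSpace ℝ (Fin d)) → ℝ≥0∞ := fun x => ENNReal.ofReal (w ‖x‖ * exp (-h x)) with hFd_def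
    set Gd : (EuclideanSpace ℝ (Fin d)) → ℝ≥0∞ := fun x => ENNReal.ofReal (w ‖x‖) with hGd_def
    have hdensf : (fun x : (EuclideanSpace ℝ (Fin d)) => ENNReal.ofReal (Real.exp (-f x))) = Fd := by
      funext x
      rw [hFd_def]
      congr 1
      rw [hw_def, ← exp_add]
      congr 1
      rw [hh_def]
      ring
    have hdensg :
        (fun x : (EuclideanSpace ℝ (Fin d)) => ENNReal.ofReal (Real.exp (-‖x‖ ^ 2 / (2 * σ ^ 2)))) = Gd := rfl
    have hAmeas : MeasurableSet {x : (EuclideanSpace ℝ (Fin d)) | r ≤ ‖x‖} :=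
      measurableSet_le measurable_const measurable_norm
    set A : Set (EuclideanSpace ℝ (Fin d)) := {x : (EuclideanSpace ℝ (Fin d)) | r ≤ ‖x‖} with hAdef
    set IA : ℝ≥0∞ := ∫⁻ x in A, Fd x ∂volume with hIA
    set IB : ℝ≥0∞ := ∫⁻ x in Aᶜ, Fd x ∂volume with hIB
    set JA : ℝ≥0∞ := ∫⁻ x in A, Gd x ∂volume with hJA
    set JB : ℝ≥0∞ := ∫⁻ x in Aᶜ, Gd x ∂volume with hJB
    have hρA : ρ A = cρ * IA := by
      rw [hρ, hdensf, Measure.smul_apply, withDensity_apply _ hAmeas, smul_eq_mul]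
    have hνA : ν A = cν * JA := by
      rw [hν, Measure.smul_apply, withDensity_apply _ hAmeas, smul_eq_mul]
    have hρuniv : cρ * (IA + IB) = 1 := by
      have h1 : ρ univ = 1 := measure_univ
      rw [hρ, hdensf, Measure.smul_apply, withDensity_apply _ MeasurableSet.univ,
        smul_eq_mul] at h1
      rw [hIA, hIB, lintegral_add_compl _ hAmeas, ← setLIntegral_univ]
      exact h1
    have hνuniv : cν * (JA + JB) = 1 := by
      have h1 : ν univ = 1 := measure_univ
      rw [hν, Measure.smul_apply, withDensity_apply _ MeasurableSet.univ,
        smul_eq_mul] at h1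
      rw [hJA, hJB, lintegral_add_compl _ hAmeas, ← setLIntegral_univ]
      exact h1
    -- nondegeneracy
    have hZf0 : IA + IB ≠ 0 := by
      intro hcon; rw [hcon, mul_zero] at hρuniv; exact one_ne_zero hρuniv.symm
    have hZfT : IA + IB ≠ ⊤ := by
      intro hcon
      rw [hcon] at hρuniv
      rcases eq_or_ne cρ 0 with hc | hc
      · rw [hc, zero_mul] at hρuniv; exact one_ne_zero hρuniv.symm
      · rw [ENNReal.mul_top hc] at hρuniv; exact ENNReal.top_ne_one hρuniv
    have hZg0 : JA + JB ≠ 0 := by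
      intro hcon; rw [hcon, mul_zero] at hνuniv; exact one_ne_zero hνuniv.symm
    have hZgT : JA + JB ≠ ⊤ := by
      intro hcon
      rw [hcon] at hνuniv
      rcases eq_or_ne cν 0 with hc | hc
      · rw [hc, zero_mul] at hνuniv; exact one_ne_zero hνuniv.symm
      · rw [ENNReal.mul_top hc] at hνuniv; exact ENNReal.top_ne_one hνuniv
    have hcρ : cρ = (IA + IB)⁻¹ := by
      have : cρ * ((IA + IB) * (IA + IB)⁻¹) = (IA + IB)⁻¹ := by
        rw [← mul_assoc, hρuniv, one_mul]
      rwa [ENNReal.mul_inv_cancel hZf0 hZfT, mul_one] at this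
    have hcν : cν = (JA + JB)⁻¹ := by
      have : cν * ((JA + JB) * (JA + JB)⁻¹) = (JA + JB)⁻¹ := by
        rw [← mul_assoc, hνuniv, one_mul]
      rwa [ENNReal.mul_inv_cancel hZg0 hZgT, mul_one] at this
    -- the key inequality
    have hkey : IA * JB ≤ JA * IB := by
      rw [hIA, hIB, hJA, hJB, hAdef, hFd_def, hGd_def]
      exact key_ineq volume w hw hw0 h hfc hmono r
    have step : IA * (JA + JB) ≤ JA * (IA + IB) := by
      rw [mul_add, mul_add]
      rw [mul_comm JA IA]
      exact add_le_add_right hkey _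
    have final := mul_le_mul_left step ((IA + IB)⁻¹ * (JA + JB)⁻¹)
    have lhs_eq : IA * (JA + JB) * ((IA + IB)⁻¹ * (JA + JB)⁻¹)
        = IA * (IA + IB)⁻¹ * ((JA + JB) * (JA + JB)⁻¹) := by ring
    have rhs_eq : JA * (IA + IB) * ((IA + IB)⁻¹ * (JA + JB)⁻¹)
        = JA * (JA + JB)⁻¹ * ((IA + IB) * (IA + IB)⁻¹) := by ring
    rw [lhs_eq, rhs_eq, ENNReal.mul_inv_cancel hZg0 hZgT,
      ENNReal.mul_inv_cancel hZf0 hZfT, mul_one, mul_one] at final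
    rw [← hAdef] at *
    rw [hρA, hνA, hcρ, hcν, mul_comm ((IA + IB)⁻¹) IA, mul_comm ((JA + JB)⁻¹) JA]
    exact final
end

section
/- Let f : ℝ^d → ℝ be m-strongly convex with minimizer x*, and let ρ be the probability measure with density proportional to exp(-f(x)). Then E_{x∼ρ}‖x − x*‖ ≤ (1/√m)(√d + 2√(2 log 2)). -/
open MeasureTheory Real Set
open scoped ENNReal

lemma quad_growth {d : ℕ} {m : ℝ} (hm : 0 < m) {f : EuclideanSpace ℝ (Fin d) → ℝ}
    (hf : StrongConvexOn univ m f) (xstar : EuclideanSpace ℝ (Fin d))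
    (hmin : ∀ x, f xstar ≤ f x) (u : EuclideanSpace ℝ (Fin d)) :
    f xstar + m / 2 * ‖u‖ ^ 2 ≤ f (xstar + u) := by
  set K := m / 2 * ‖u‖ ^ 2 with hK
  have hK0 : 0 ≤ K := by positivity
  have claim : ∀ ε : ℝ, ε ∈ Ioo (0:ℝ) 1 → f xstar + K ≤ f (xstar + u) + ε * K := by
    intro ε hε
    obtain ⟨hε0, hε1⟩ := hε
    have key := hf.2 (mem_univ (xstar + u)) (mem_univ xstar) hε0.le (by linarith : (0:ℝ) ≤ 1 - ε)
      (by ring)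
    have heq : ε • (xstar + u) + (1 - ε) • xstar = xstar + ε • u := by module
    have hnorm : ‖xstar + u - xstar‖ = ‖u‖ := by rw [add_sub_cancel_left]
    rw [heq, hnorm] at key
    simp only [smul_eq_mul] at key
    have h := (hmin (xstar + ε • u)).trans key
    rw [← hK] at h
    have h5 : ε * f xstar ≤ ε * (f (xstar + u) - (1 - ε) * K) := by ring_nf; ring_nf at h; linarith
    have h6 : f xstar ≤ f (xstar + u) - (1 - ε) * K := le_of_mul_le_mul_left h5 hε0
    linarith
  have lim : Filter.Tendsto (fun ε : ℝ => f (xstar + u) + ε * K) (nhdsWithin 0 (Ioi 0))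
      (nhds (f (xstar + u))) := by
    have h0 : Filter.Tendsto (fun ε : ℝ => f (xstar + u) + ε * K) (nhds 0)
        (nhds (f (xstar + u) + 0 * K)) :=
      (continuous_const.add (continuous_id.mul continuous_const)).tendsto 0
    simpa using h0.mono_left nhdsWithin_le_nhds
  refine ge_of_tendsto lim ?_
  filter_upwards [Ioo_mem_nhdsGT (zero_lt_one : (0:ℝ) < 1)]
    with ε hε
  exact claim ε hε

lemma ray_growth {d : ℕ} {m : ℝ} (hm : 0 < m) {f : EuclideanSpace ℝ (Fin d) → ℝ}
    (hf : StrongConvexOn univ m f) (xstar : EuclideanSpace ℝ (Fin d))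
    (hmin : ∀ x, f xstar ≤ f x) (u : EuclideanSpace ℝ (Fin d)) {s : ℝ} (hs : 1 ≤ s) :
    f (xstar + u) + m / 2 * (s ^ 2 - 1) * ‖u‖ ^ 2 ≤ f (xstar + s • u) := by
  rcases eq_or_lt_of_le hs with h1 | h1
  · simp [← h1]
  have hs0 : 0 < s := by linarith
  have key := hf.2 (mem_univ (xstar + s • u)) (mem_univ xstar)
    (by positivity : (0:ℝ) ≤ s⁻¹) (by simp [hs0.le, inv_le_one_iff₀]; right; linarith : (0:ℝ) ≤ 1 - s⁻¹)
    (by ring)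
  have heq : s⁻¹ • (xstar + s • u) + (1 - s⁻¹) • xstar = xstar + u := by
    rw [smul_add, smul_smul, inv_mul_cancel₀ hs0.ne']
    module
  have hnorm : ‖xstar + s • u - xstar‖ = s * ‖u‖ := by
    rw [add_sub_cancel_left, norm_smul, Real.norm_eq_abs, abs_of_pos hs0]
  rw [heq, hnorm] at key
  simp only [smul_eq_mul] at key
  have hquad := quad_growth hm hf xstar hmin (s • u)
  rw [norm_smul, Real.norm_eq_abs, abs_of_pos hs0] at hquad
  -- key : f (xstar + u) ≤ s⁻¹ * f (xstar + s•u) + (1 - s⁻¹) * f xstar - s⁻¹*(1-s⁻¹)*(m/2*(s*‖u‖)^2)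
  -- hquad : f xstar + m/2*(s*‖u‖)^2 ≤ f (xstar + s•u)
  have e2 : s * f (xstar + u) ≤
      f (xstar + s • u) + (s - 1) * f xstar - (s - 1) * (m / 2 * s * ‖u‖ ^ 2) := by
    calc s * f (xstar + u)
        ≤ s * (s⁻¹ * f (xstar + s • u) + (1 - s⁻¹) * f xstar
            - s⁻¹ * (1 - s⁻¹) * (m / 2 * (s * ‖u‖) ^ 2)) :=
          mul_le_mul_of_nonneg_left key hs0.le
      _ = f (xstar + s • u) + (s - 1) * f xstar - (s - 1) * (m / 2 * s * ‖u‖ ^ 2) := by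
          field_simp
  have e3 := mul_le_mul_of_nonneg_left hquad (show (0:ℝ) ≤ s - 1 by linarith)
  have e4 : s * (f (xstar + u) + m / 2 * (s ^ 2 - 1) * ‖u‖ ^ 2) ≤ s * f (xstar + s • u) := by
    nlinarith [e2, e3]
  exact le_of_mul_le_mul_left e4 hs0

lemma kappa_le {m s r t : ℝ} (d : ℕ) (hm : 0 < m) (hr : r = (Real.sqrt d + 1) / Real.sqrt m)
    (ht : r ≤ t) (hs : s = t / r) :
    s ^ d * Real.exp (-(m/2) * (s^2 - 1) * r^2) ≤ Real.exp (-Real.sqrt m * (t - r)) := by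
  have hσ : 0 < Real.sqrt m := Real.sqrt_pos.2 hm
  have hδ : 0 ≤ Real.sqrt d := Real.sqrt_nonneg _
  have hr0 : 0 < r := by rw [hr]; positivity
  have hs1 : 1 ≤ s := by rw [hs]; rw [le_div_iff₀ hr0]; linarith
  have hs0 : 0 ≤ s := by linarith
  have htsr : t = s * r := by rw [hs, div_mul_cancel₀ t hr0.ne']
  have hσr : Real.sqrt m * r = Real.sqrt d + 1 := by
    rw [hr]; field_simp
  have hmr : m * r ^ 2 = (Real.sqrt d + 1) ^ 2 := by
    have : (Real.sqrt m * r) ^ 2 = (Real.sqrt d + 1) ^ 2 := by rw [hσr]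
    rw [mul_pow, Real.sq_sqrt hm.le] at this
    exact this
  have hd : Real.sqrt d ^ 2 = (d : ℝ) := Real.sq_sqrt (Nat.cast_nonneg d)
  have hpow : s ^ d ≤ Real.exp ((d : ℝ) * (s - 1)) := by
    have h1 : s ≤ Real.exp (s - 1) := by
      have := Real.add_one_le_exp (s - 1); linarith
    calc s ^ d ≤ Real.exp (s - 1) ^ d := pow_le_pow_left₀ hs0 h1 d
      _ = Real.exp ((d : ℝ) * (s - 1)) := by rw [← Real.exp_nat_mul]
  calc s ^ d * Real.exp (-(m/2) * (s^2 - 1) * r^2)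
      ≤ Real.exp ((d : ℝ) * (s - 1)) * Real.exp (-(m/2) * (s^2 - 1) * r^2) := by
        apply mul_le_mul_of_nonneg_right hpow (Real.exp_nonneg _)
    _ = Real.exp ((d : ℝ) * (s - 1) + -(m/2) * (s^2 - 1) * r^2) := by rw [← Real.exp_add]
    _ ≤ Real.exp (-Real.sqrt m * (t - r)) := by
        apply Real.exp_le_exp.2
        have htr : t - r = (s - 1) * r := by rw [htsr]; ring
        rw [htr]
        have key : (d : ℝ) * (s - 1) + Real.sqrt m * ((s - 1) * r)
            ≤ (m/2) * (s^2 - 1) * r^2 := by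
          have e1 : (m/2) * (s^2 - 1) * r^2 = (s - 1) * (s + 1) * ((Real.sqrt d + 1)^2 / 2) := by
            have : (m / 2) * (s ^ 2 - 1) * r ^ 2 = (s^2 - 1) / 2 * (m * r ^ 2) := by ring
            rw [this, hmr]; ring
          have e2 : Real.sqrt m * ((s - 1) * r) = (s - 1) * (Real.sqrt d + 1) := by
            rw [show Real.sqrt m * ((s - 1) * r) = (s - 1) * (Real.sqrt m * r) by ring, hσr]
          rw [e1, e2]
          nlinarith [hd, sq_nonneg ((s - 1) * (Real.sqrt d + 1)),
            mul_nonneg (sub_nonneg.2 hs1) hδ]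
        linarith

lemma setIntegral_tail_le {d : ℕ} {m : ℝ} (hm : 0 < m) {f : EuclideanSpace ℝ (Fin d) → ℝ}
    (hf : StrongConvexOn univ m f) (xstar : EuclideanSpace ℝ (Fin d))
    (hmin : ∀ x, f xstar ≤ f x)
    (hgint : Integrable (fun x : EuclideanSpace ℝ (Fin d) => Real.exp (-f x)))
    {r s : ℝ} (hr : 0 < r) (hs : 1 ≤ s) :
    ∫ x in {x : EuclideanSpace ℝ (Fin d) | s * r < ‖x - xstar‖}, Real.exp (-f x)
      ≤ s ^ d * Real.exp (-(m/2) * (s^2 - 1) * r^2) *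
        ∫ x in {x : EuclideanSpace ℝ (Fin d) | r < ‖x - xstar‖}, Real.exp (-f x) := by
  have hs0 : 0 < s := lt_of_lt_of_le one_pos hs
  set g : EuclideanSpace ℝ (Fin d) → ℝ := fun x => Real.exp (-f x) with hg
  have hnormmeas : Measurable (fun x : EuclideanSpace ℝ (Fin d) => ‖x - xstar‖) :=
    (continuous_id.sub continuous_const).norm.measurable
  set At : Set (EuclideanSpace ℝ (Fin d)) := {x | s * r < ‖x - xstar‖} with hAt
  set Ar : Set (EuclideanSpace ℝ (Fin d)) := {x | r < ‖x - xstar‖} with hAr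
  have hAtm : MeasurableSet At := measurableSet_lt measurable_const hnormmeas
  have hArm : MeasurableSet Ar := measurableSet_lt measurable_const hnormmeas
  -- change of variables
  have step3 : ∫ x, At.indicator g x = s ^ d * ∫ u, At.indicator g (xstar + s • u) := by
    have h3 := Measure.integral_comp_smul_of_nonneg (μ := volume)
      (fun y => At.indicator g (xstar + y)) s (hR := hs0.le)
    rw [finrank_euclideanSpace_fin] at h3
    have htrans : ∫ y, At.indicator g (xstar + y) = ∫ x, At.indicator g x :=
      integral_add_left_eq_self (At.indicator g) xstar
    rw [htrans] at h3
    rw [h3, smul_eq_mul, ← mul_assoc, mul_inv_cancel₀ (by positivity : (s:ℝ)^d ≠ 0), one_mul]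
  -- pointwise bound
  have step4 : ∀ u, At.indicator g (xstar + s • u)
      ≤ Real.exp (-(m/2) * (s^2 - 1) * r^2) * Ar.indicator g (xstar + u) := by
    intro u
    by_cases hmem : xstar + s • u ∈ At
    · have hnorm : ‖xstar + s • u - xstar‖ = s * ‖u‖ := by
        rw [add_sub_cancel_left, norm_smul, Real.norm_eq_abs, abs_of_pos hs0]
      have hru : r < ‖u‖ := by
        have := hmem
        rw [hAt, mem_setOf_eq, hnorm] at this
        exact lt_of_mul_lt_mul_left this hs0.le
      have hmem' : xstar + u ∈ Ar := by
        rw [hAr, mem_setOf_eq, add_sub_cancel_left]; exact hru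
      rw [indicator_of_mem hmem g, indicator_of_mem hmem' g, hg]
      simp only
      rw [← Real.exp_add, Real.exp_le_exp]
      have hray := ray_growth hm hf xstar hmin u hs
      have hrr : (m/2) * (s^2 - 1) * r^2 ≤ (m/2) * (s^2 - 1) * ‖u‖^2 := by
        have h1 : (0:ℝ) ≤ (m/2) * (s^2 - 1) := by
          apply mul_nonneg (by linarith)
          nlinarith [mul_le_mul_of_nonneg_left hs (by linarith : (0:ℝ) ≤ s)]
        have h2 : r^2 ≤ ‖u‖^2 := by nlinarith [hr, hru]
        exact mul_le_mul_of_nonneg_left h2 h1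
      linarith
    · rw [indicator_of_notMem hmem]
      exact mul_nonneg (Real.exp_nonneg _) (indicator_nonneg (fun x _ => Real.exp_nonneg _) _)
  -- integral comparison
  have step5 : ∫ u, At.indicator g (xstar + s • u)
      ≤ Real.exp (-(m/2) * (s^2 - 1) * r^2) * ∫ u, Ar.indicator g (xstar + u) := by
    rw [← integral_const_mul]
    apply integral_mono_of_nonneg
    · exact Filter.Eventually.of_forall fun u => indicator_nonneg (fun x _ => Real.exp_nonneg _) _
    · exact ((hgint.indicator hArm).comp_add_left xstar).const_mul _
    · exact Filter.Eventually.of_forall step4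
  have step6 : ∫ u, Ar.indicator g (xstar + u) = ∫ x in Ar, g x := by
    rw [integral_add_left_eq_self (Ar.indicator g) xstar, integral_indicator hArm]
  rw [← integral_indicator hAtm, step3]
  calc s ^ d * ∫ u, At.indicator g (xstar + s • u)
      ≤ s ^ d * (Real.exp (-(m/2) * (s^2 - 1) * r^2) * ∫ u, Ar.indicator g (xstar + u)) := by
        apply mul_le_mul_of_nonneg_left step5 (by positivity)
    _ = s ^ d * Real.exp (-(m/2) * (s^2 - 1) * r^2) * ∫ x in Ar, g x := by
        rw [step6]; ring

/-- For `ρ ∝ e^{-f}` with `f` `m`-strongly convex minimized at `xstar`,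
`E_ρ ‖x - xstar‖ ≤ (1/√m)(√d + 2√(2 log 2))`. -/
theorem expectation_dist_to_mode_le
    {d : ℕ} (m : ℝ) (hm : 0 < m)
    (f : EuclideanSpace ℝ (Fin d) → ℝ)
    (hf : StrongConvexOn univ m f)
    (xstar : EuclideanSpace ℝ (Fin d))
    (hmin : ∀ x, f xstar ≤ f x)
    (ρ : Measure (EuclideanSpace ℝ (Fin d)))
    [IsProbabilityMeasure ρ]
    (c : ℝ≥0∞)
    (hρ : ρ = c • volume.withDensity (fun x => ENNReal.ofReal (Real.exp (-f x)))) :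
    ∫ x, ‖x - xstar‖ ∂ρ ≤ (1 / Real.sqrt m) * (Real.sqrt d + 2 * Real.sqrt (2 * Real.log 2)) := by
  have hσ : 0 < Real.sqrt m := Real.sqrt_pos.2 hm
  have hδ : 0 ≤ Real.sqrt d := Real.sqrt_nonneg _
  have hlog : (1:ℝ) ≤ Real.sqrt (2 * Real.log 2) := by
    rw [Real.one_le_sqrt]
    nlinarith [Real.log_two_gt_d9]
  have hRHS : 0 ≤ (1 / Real.sqrt m) * (Real.sqrt d + 2 * Real.sqrt (2 * Real.log 2)) := by
    positivity
  by_cases hint : Integrable (fun x => ‖x - xstar‖) ρ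
  swap
  · rw [integral_undef hint]; exact hRHS
  -- continuity of f
  have hconv : ConvexOn ℝ univ f := hf.convexOn (by intro rr; dsimp; positivity)
  have hfc : Continuous f := by
    rw [← continuousOn_univ]
    exact hconv.continuousOn isOpen_univ
  have hgc : Continuous (fun x : EuclideanSpace ℝ (Fin d) => Real.exp (-f x)) :=
    Real.continuous_exp.comp hfc.neg
  -- normalization facts
  have h1 : c * ∫⁻ x, ENNReal.ofReal (Real.exp (-f x)) = 1 := by
    have h := measure_univ (μ := ρ)
    rw [hρ, Measure.smul_apply, smul_eq_mul,
      withDensity_apply _ MeasurableSet.univ, Measure.restrict_univ] at h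
    exact h
  have hc0 : c ≠ 0 := by rintro rfl; simp at h1
  have hL0 : ∫⁻ x, ENNReal.ofReal (Real.exp (-f x)) ≠ 0 := by
    intro hL; rw [hL, mul_zero] at h1; simp at h1
  have hctop : c ≠ ⊤ := by
    intro hc; rw [hc, ENNReal.top_mul hL0] at h1; simp at h1
  have hLtop : ∫⁻ x, ENNReal.ofReal (Real.exp (-f x)) ≠ ⊤ := by
    intro hL; rw [hL, ENNReal.mul_top hc0] at h1; simp at h1
  have hgint : Integrable (fun x : EuclideanSpace ℝ (Fin d) => Real.exp (-f x)) := by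
    refine ⟨hgc.aestronglyMeasurable, ?_⟩
    rw [hasFiniteIntegral_iff_ofReal (Filter.Eventually.of_forall fun x => Real.exp_nonneg _)]
    exact lt_top_iff_ne_top.2 hLtop
  -- measurability of tail sets
  have hAm : ∀ t : ℝ, MeasurableSet {x : EuclideanSpace ℝ (Fin d) | t < ‖x - xstar‖} :=
    fun t => measurableSet_lt measurable_const
      (continuous_id.sub continuous_const).norm.measurable
  have hItoReal : ∀ t : ℝ,
      (ρ {x | t < ‖x - xstar‖}).toReal
        = c.toReal * ∫ x in {x : EuclideanSpace ℝ (Fin d) | t < ‖x - xstar‖}, Real.exp (-f x) := by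
    intro t
    rw [hρ, Measure.smul_apply, smul_eq_mul, withDensity_apply _ (hAm t),
      ← ofReal_integral_eq_lintegral_ofReal hgint.integrableOn
        (Filter.Eventually.of_forall fun x => Real.exp_nonneg _),
      ENNReal.toReal_mul, ENNReal.toReal_ofReal
        (integral_nonneg fun x => Real.exp_nonneg _)]
  set r : ℝ := (Real.sqrt d + 1) / Real.sqrt m with hrdef
  have hr0 : 0 < r := by rw [hrdef]; positivity
  have hprob : ∀ t : ℝ, (ρ {x | t < ‖x - xstar‖}).toReal ≤ 1 := by
    intro t
    have h := prob_le_one (μ := ρ) (s := {x | t < ‖x - xstar‖})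
    have := ENNReal.toReal_mono (by simp) h
    simpa using this
  have tail : ∀ t : ℝ, r ≤ t →
      (ρ {x | t < ‖x - xstar‖}).toReal ≤ Real.exp (-Real.sqrt m * (t - r)) := by
    intro t ht
    have hs : 1 ≤ t / r := (one_le_div hr0).2 ht
    have hsr : (t / r) * r = t := div_mul_cancel₀ t hr0.ne'
    have key := setIntegral_tail_le hm hf xstar hmin hgint hr0 hs
    rw [hsr] at key
    have hκ := kappa_le d hm hrdef ht rfl
    set κ := (t/r) ^ d * Real.exp (-(m/2) * ((t/r)^2 - 1) * r^2) with hκdef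
    have hκ0 : 0 ≤ κ := by positivity
    calc (ρ {x | t < ‖x - xstar‖}).toReal
        = c.toReal * ∫ x in {x : EuclideanSpace ℝ (Fin d) | t < ‖x - xstar‖}, Real.exp (-f x) :=
          hItoReal t
      _ ≤ c.toReal * (κ * ∫ x in {x : EuclideanSpace ℝ (Fin d) | r < ‖x - xstar‖},
            Real.exp (-f x)) :=
          mul_le_mul_of_nonneg_left key ENNReal.toReal_nonneg
      _ = κ * (c.toReal * ∫ x in {x : EuclideanSpace ℝ (Fin d) | r < ‖x - xstar‖},
            Real.exp (-f x)) := by ring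
      _ = κ * (ρ {x | r < ‖x - xstar‖}).toReal := by rw [← hItoReal r]
      _ ≤ κ * 1 := mul_le_mul_of_nonneg_left (hprob r) hκ0
      _ ≤ Real.exp (-Real.sqrt m * (t - r)) := by rw [mul_one]; exact hκ
  -- layer cake
  rw [hint.integral_eq_integral_meas_lt (Filter.Eventually.of_forall fun x => norm_nonneg _)]
  -- bounding function
  set B : ℝ → ℝ := fun t => (Ioc 0 r).indicator (fun _ => (1:ℝ)) t
      + (Ioi r).indicator (fun t => Real.exp (-Real.sqrt m * (t - r))) t with hBdef
  have hexpint : IntegrableOn (fun t : ℝ => Real.exp (-Real.sqrt m * (t - r))) (Ioi r) := by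
    have h := (exp_neg_integrableOn_Ioi r hσ).const_mul (Real.exp (Real.sqrt m * r))
    refine h.congr ((ae_restrict_iff' measurableSet_Ioi).2 (Filter.Eventually.of_forall
      fun t ht => ?_))
    dsimp only
    rw [← Real.exp_add]; congr 1; ring
  have hB1int : Integrable ((Ioc 0 r).indicator fun _ => (1:ℝ)) := by
    rw [integrable_indicator_iff measurableSet_Ioc]
    exact integrableOn_const (by rw [Real.volume_Ioc]; exact ENNReal.ofReal_ne_top)
  have hB2int : Integrable ((Ioi r).indicator fun t => Real.exp (-Real.sqrt m * (t - r))) := by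
    rw [integrable_indicator_iff measurableSet_Ioi]
    exact hexpint
  have hBint : Integrable B := hB1int.add hB2int
  have hmono : ∀ t ∈ Ioi (0:ℝ),
      (ρ {x | t < ‖x - xstar‖}).toReal ≤ B t := by
    intro t ht
    rcases le_or_gt t r with htr | htr
    · have hB : B t = 1 := by
        have hmem1 : t ∈ Ioc (0:ℝ) r := ⟨ht, htr⟩
        have hmem2 : t ∉ Ioi r := fun h => absurd (mem_Ioi.mp h) (not_lt.2 htr)
        simp only [hBdef]
        rw [Set.indicator_of_mem hmem1 (fun _ => (1:ℝ)),
          Set.indicator_of_notMem hmem2, add_zero]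
      rw [hB]; exact hprob t
    · have hB : B t = Real.exp (-Real.sqrt m * (t - r)) := by
        have hmem1 : t ∉ Ioc (0:ℝ) r := fun h => absurd (mem_Ioc.mp h).2 (not_le.2 htr)
        have hmem2 : t ∈ Ioi r := htr
        simp only [hBdef]
        rw [Set.indicator_of_notMem hmem1, Set.indicator_of_mem hmem2, zero_add]
      rw [hB]; exact tail t htr.le
  have hstep : ∫ t in Ioi (0:ℝ), (ρ {x | t < ‖x - xstar‖}).toReal ≤ ∫ t in Ioi (0:ℝ), B t := by
    apply integral_mono_of_nonneg
    · exact Filter.Eventually.of_forall fun t => ENNReal.toReal_nonneg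
    · exact hBint.restrict
    · exact (ae_restrict_iff' measurableSet_Ioi).2 (Filter.Eventually.of_forall hmono)
  have hBval : ∫ t in Ioi (0:ℝ), B t = r + (Real.sqrt m)⁻¹ := by
    rw [hBdef]
    rw [integral_add (hB1int.restrict) (hB2int.restrict)]
    congr 1
    · rw [setIntegral_indicator measurableSet_Ioc,
        inter_eq_self_of_subset_right Ioc_subset_Ioi_self, setIntegral_const, smul_eq_mul,
        mul_one, Real.volume_real_Ioc_of_le hr0.le, sub_zero]
    · rw [setIntegral_indicator measurableSet_Ioi,
        inter_eq_self_of_subset_right (Ioi_subset_Ioi hr0.le)]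
      -- FTC
      have hFTC := integral_Ioi_of_hasDerivAt_of_tendsto
        (f := fun t : ℝ => -(Real.sqrt m)⁻¹ * Real.exp (-Real.sqrt m * (t - r)))
        (f' := fun t : ℝ => Real.exp (-Real.sqrt m * (t - r)))
        (a := r) (m := 0) ?_ ?_ hexpint ?_
      · rw [hFTC]
        simp [Real.exp_zero]
      · exact (Continuous.continuousWithinAt (by fun_prop))
      · intro x hx
        have h1 : HasDerivAt (fun t : ℝ => -Real.sqrt m * (t - r)) (-Real.sqrt m) x := by
          simpa using ((hasDerivAt_id x).sub_const r).const_mul (-Real.sqrt m)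
        have h3 := h1.exp.const_mul (-(Real.sqrt m)⁻¹)
        convert h3 using 1
        · rfl
        · field_simp [hσ.ne']
      · have hlin : Filter.Tendsto (fun t : ℝ => -Real.sqrt m * (t - r)) Filter.atTop
            Filter.atBot := by
          apply (Filter.tendsto_const_mul_atBot_of_neg (by linarith : -Real.sqrt m < 0)).2
          simpa [sub_eq_add_neg] using Filter.tendsto_atTop_add_const_right Filter.atTop (-r)
            Filter.tendsto_id
        have := (Real.tendsto_exp_atBot).comp hlin
        simpa using this.const_mul (-(Real.sqrt m)⁻¹)
  rw [hBval] at hstep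
  refine hstep.trans ?_
  have heq : r + (Real.sqrt m)⁻¹ = (Real.sqrt d + 2) / Real.sqrt m := by
    rw [hrdef]; field_simp; ring
  rw [heq, one_div, inv_mul_eq_div]
  gcongr
  linarith [hlog]
end

section
/- Let Y₁,…,Y_M be independent nonnegative random variables with means Ȳᵢ = E[Yᵢ] > 0, and suppose there is η > 0 with ηM ≤ 1/5 such that E[Yᵢ²] ≤ (1+η)Ȳᵢ² for each i. Then for every ε > 0, P( |Y₁⋯Y_M − Ȳ₁⋯Ȳ_M| / (Ȳ₁⋯Ȳ_M) ≥ ε/2 ) ≤ 5ηM/ε². -/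
open MeasureTheory ProbabilityTheory Finset
open scoped ENNReal

lemma pow_one_add_le (η : ℝ) (hη : 0 < η) :
    ∀ M : ℕ, η * M ≤ 1 / 5 → (1 + η) ^ M ≤ 1 + 5 / 4 * (η * M) := by
  intro M
  induction M with
  | zero => simp
  | succ n ih =>
    intro h
    have hn : η * n ≤ 1 / 5 := by push_cast at h ⊢; nlinarith
    have h1 := ih hn
    have h2 : (0:ℝ) < 1 + η := by linarith
    have h3 : (1 + η) ^ (n + 1) = (1 + η) ^ n * (1 + η) := by ring
    rw [h3]
    have h4 : (1 + η) ^ n * (1 + η) ≤ (1 + 5 / 4 * (η * n)) * (1 + η) :=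
      mul_le_mul_of_nonneg_right h1 h2.le
    push_cast; push_cast at h; nlinarith


/-- Chebyshev bound for a product of independent random variables with
relative second moments close to 1. -/
theorem prod_concentration
    {Ω : Type*} [MeasurableSpace Ω] (P : Measure Ω) [IsProbabilityMeasure P]
    (M : ℕ) (Y : Fin M → Ω → ℝ)
    (hmeas : ∀ i, Measurable (Y i))
    (hindep : iIndepFun Y P)
    (hnonneg : ∀ i, ∀ ω, 0 ≤ Y i ω)
    (hL2 : ∀ i, MemLp (Y i) 2 P)
    (Ybar : Fin M → ℝ) (hYbar : ∀ i, Ybar i = ∫ ω, Y i ω ∂P)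
    (hpos : ∀ i, 0 < Ybar i)
    (η : ℝ) (hη : 0 < η) (hηM : η * M ≤ 1 / 5)
    (hmom : ∀ i, ∫ ω, (Y i ω) ^ 2 ∂P ≤ (1 + η) * (Ybar i) ^ 2)
    (ε : ℝ) (hε : 0 < ε) :
    P {ω | ε / 2 ≤ |(∏ i, Y i ω) - ∏ i, Ybar i| / ∏ i, Ybar i}
      ≤ ENNReal.ofReal (5 * η * M / ε ^ 2) := by
  have hMprod : ∀ t : Finset (Fin M), Measurable fun ω => ∏ i ∈ t, Y i ω :=
    fun t => Finset.measurable_prod t fun i _ => hmeas i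
  have key : ∀ s : Finset (Fin M),
      MemLp (fun ω => ∏ i ∈ s, Y i ω) 2 P ∧
      (∫ ω, ∏ i ∈ s, Y i ω ∂P) = (∏ i ∈ s, Ybar i) ∧
      (∫ ω, (∏ i ∈ s, Y i ω) ^ 2 ∂P) ≤ ∏ i ∈ s, ((1 + η) * Ybar i ^ 2) := by
    intro s
    induction s using Finset.induction_on with
    | empty =>
      refine ⟨?_, ?_, ?_⟩ <;> simp [memLp_const (1 : ℝ)]
    | @insert a s ha ih =>
      obtain ⟨ihL2, ihInt, ihSq⟩ := ih
      have hpe : (∏ j ∈ s, Y j) = fun ω => ∏ i ∈ s, Y i ω := by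
        funext ω; simp
      have hps : IndepFun (fun ω => ∏ i ∈ s, Y i ω) (Y a) P := by
        rw [← hpe]; exact hindep.indepFun_finset_prod_of_notMem hmeas ha
      have hsq : IndepFun (fun ω => Y a ω ^ 2) (fun ω => (∏ i ∈ s, Y i ω) ^ 2) P :=
        hps.symm.comp (measurable_id.pow_const 2) (measurable_id.pow_const 2)
      have hIaSq : Integrable (fun ω => Y a ω ^ 2) P := (hL2 a).integrable_sq
      have hIsSq : Integrable (fun ω => (∏ i ∈ s, Y i ω) ^ 2) P := ihL2.integrable_sq
      have hint : Integrable (fun ω => Y a ω ^ 2 * (∏ i ∈ s, Y i ω) ^ 2) P :=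
        hsq.integrable_mul hIaSq hIsSq
      have hprodrw : ∀ ω, (∏ i ∈ insert a s, Y i ω) = Y a ω * ∏ i ∈ s, Y i ω :=
        fun ω => Finset.prod_insert ha
      have hL2' : MemLp (fun ω => ∏ i ∈ insert a s, Y i ω) 2 P := by
        rw [memLp_two_iff_integrable_sq (hMprod _).aestronglyMeasurable]
        simpa only [hprodrw, mul_pow] using hint
      have hintmul : ∫ ω, Y a ω * ∏ i ∈ s, Y i ω ∂P
          = (∫ ω, Y a ω ∂P) * ∫ ω, ∏ i ∈ s, Y i ω ∂P :=
        hps.symm.integral_fun_mul_eq_mul_integral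
          (hmeas a).aestronglyMeasurable (hMprod s).aestronglyMeasurable
      have hIint : (∫ ω, ∏ i ∈ insert a s, Y i ω ∂P) = ∏ i ∈ insert a s, Ybar i := by
        simp only [hprodrw, Finset.prod_insert ha]
        rw [hintmul, ihInt, ← hYbar a]
      refine ⟨hL2', hIint, ?_⟩
      have hsqint : ∫ ω, Y a ω ^ 2 * (∏ i ∈ s, Y i ω) ^ 2 ∂P
          = (∫ ω, Y a ω ^ 2 ∂P) * ∫ ω, (∏ i ∈ s, Y i ω) ^ 2 ∂P :=
        hsq.integral_fun_mul_eq_mul_integral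
          ((hmeas a).pow_const 2).aestronglyMeasurable ((hMprod s).pow_const 2).aestronglyMeasurable
      simp only [hprodrw, mul_pow, Finset.prod_insert ha]
      rw [hsqint]
      exact mul_le_mul (hmom a) ihSq (integral_nonneg fun ω => sq_nonneg _)
        (by nlinarith [sq_nonneg (Ybar a)])
  obtain ⟨hZL2, hEZ, hZsq⟩ := key Finset.univ
  set Z : Ω → ℝ := fun ω => ∏ i, Y i ω with hZ
  set B : ℝ := ∏ i, Ybar i with hBdef
  have hB : 0 < B := Finset.prod_pos fun i _ => hpos i
  have hprodbound : (∏ i : Fin M, ((1 + η) * Ybar i ^ 2)) = (1 + η) ^ M * B ^ 2 := by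
    rw [Finset.prod_mul_distrib, Finset.prod_const, ← Finset.prod_pow]
    simp
  have hpow := pow_one_add_le η hη M hηM
  have hVar : variance Z P ≤ 5 / 4 * (η * M) * B ^ 2 := by
    rw [variance_eq_sub hZL2]
    have h1 : P[Z ^ 2] = ∫ ω, (∏ i, Y i ω) ^ 2 ∂P := by rfl
    have h2 : P[Z] = B := hEZ
    rw [h1, h2]
    have := hZsq.trans_eq hprodbound
    nlinarith [sq_nonneg B]
  have hc : 0 < ε / 2 * B := by positivity
  have cheb := meas_ge_le_variance_div_sq hZL2 hc
  have hset : {ω | ε / 2 ≤ |(∏ i, Y i ω) - ∏ i, Ybar i| / ∏ i, Ybar i}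
      = {ω | ε / 2 * B ≤ |Z ω - P[Z]|} := by
    ext ω
    simp only [Set.mem_setOf_eq, hEZ]
    rw [le_div_iff₀ hB]
  rw [hset]
  refine cheb.trans (ENNReal.ofReal_le_ofReal ?_)
  rw [div_le_div_iff₀ (by positivity) (by positivity)]
  nlinarith [variance_nonneg Z P, sq_nonneg B, sq_nonneg ε, mul_pos hB hB,
    mul_pos hε hε, hη.le, Nat.cast_nonneg (α := ℝ) M]
end

section
/- Let f : ℝ^d → ℝ be μ-strongly convex and L-smooth with minimum f(x*) = 0 at x* = 0. Let Z₁ = ∫_{ℝ^d} exp(−f(x) − ‖x‖²/(2σ₁²)) dx with σ₁² = ε/(2dL). Then (1 − ε/2)(2πσ₁²)^{d/2} ≤ Z₁ ≤ (2πσ₁²)^{d/2}. -/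
open MeasureTheory Real Set
open scoped ENNReal RealInnerProductSpace

/-- The normalizing constant at the first (lowest) temperature is within `1 ± ε/2`
of the Gaussian normalizing constant `(2πσ₁²)^{d/2}`, where `σ₁² = ε/(2dL)`. -/
theorem start_partition_function_bound
    {d : ℕ} (hd : 0 < d) (μ L ε : ℝ) (hμ : 0 < μ) (hL : μ ≤ L)
    (hε : 0 < ε) (hε1 : ε ≤ 1)
    (f : EuclideanSpace ℝ (Fin d) → ℝ)
    (hC2 : ContDiff ℝ 2 f)
    (hsc : ∀ x y, μ / 2 * ‖x - y‖ ^ 2 ≤ f y - f x - ⟪gradient f x, y - x⟫)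
    (hsm : ∀ x y, f y - f x - ⟪gradient f x, y - x⟫ ≤ L / 2 * ‖x - y‖ ^ 2)
    (hf0 : f 0 = 0) (hfnonneg : ∀ x, 0 ≤ f x) :
    (1 - ε / 2) * (2 * π * (ε / (2 * d * L))) ^ ((d : ℝ) / 2)
        ≤ ∫ x : EuclideanSpace ℝ (Fin d),
            Real.exp (-f x - ‖x‖ ^ 2 / (2 * (ε / (2 * d * L)))) ∧
      ∫ x : EuclideanSpace ℝ (Fin d),
            Real.exp (-f x - ‖x‖ ^ 2 / (2 * (ε / (2 * d * L))))
        ≤ (2 * π * (ε / (2 * d * L))) ^ ((d : ℝ) / 2) := by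
  have hLpos : (0:ℝ) < L := lt_of_lt_of_le hμ hL
  have hdpos : (0:ℝ) < (d:ℝ) := by exact_mod_cast hd
  set σ2 : ℝ := ε / (2 * d * L) with hσ2
  have hσ2pos : 0 < σ2 := by positivity
  -- gradient at 0 is 0
  have hg0 : gradient f 0 = 0 := by
    set g := gradient f 0 with hg
    by_contra hne
    have hgn : 0 < ‖g‖ := norm_pos_iff.mpr hne
    have h := hsm 0 (-(L⁻¹) • g)
    simp only [hf0, sub_zero, zero_sub, norm_neg, norm_smul, inner_smul_right,
      real_inner_self_eq_norm_sq, Real.norm_eq_abs, abs_neg, abs_inv,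
      abs_of_pos hLpos] at h
    have hfnn := hfnonneg (-(L⁻¹) • g)
    have hinv : 0 < L⁻¹ := inv_pos.mpr hLpos
    have hLL : L⁻¹ * L = 1 := inv_mul_cancel₀ hLpos.ne'
    rw [← hg, real_inner_self_eq_norm_sq] at h
    nlinarith [mul_pos (mul_pos hgn hgn) hinv]
  -- f x ≤ L/2 ‖x‖²
  have fupper : ∀ x : EuclideanSpace ℝ (Fin d), f x ≤ L / 2 * ‖x‖ ^ 2 := by
    intro x
    have h := hsm 0 x
    rw [hf0, hg0, sub_zero, inner_zero_left, sub_zero, zero_sub, norm_neg] at h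
    exact h
  -- Gaussian integrals
  have hdim : Module.finrank ℝ (EuclideanSpace ℝ (Fin d)) = d := by simp
  have gauss : ∀ b : ℝ, 0 < b →
      ∫ x : EuclideanSpace ℝ (Fin d), rexp (-b * ‖x‖ ^ 2) = (π / b) ^ ((d : ℝ) / 2) := by
    intro b hb
    rw [GaussianFourier.integral_rexp_neg_mul_sq_norm hb, hdim]
  have intg : ∀ b : ℝ, 0 < b →
      Integrable (fun x : EuclideanSpace ℝ (Fin d) => rexp (-b * ‖x‖ ^ 2)) := by
    intro b hb
    exact Integrable.of_integral_ne_zero (by rw [gauss b hb]; positivity)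
  set b1 : ℝ := 1 / (2 * σ2) with hb1
  have hb1pos : 0 < b1 := by positivity
  set b2 : ℝ := L / 2 + 1 / (2 * σ2) with hb2
  have hb2pos : 0 < b2 := by positivity
  -- the integrand
  set h : EuclideanSpace ℝ (Fin d) → ℝ :=
    fun x => rexp (-f x - ‖x‖ ^ 2 / (2 * σ2)) with hh
  have hcont : Continuous h := by
    apply Real.continuous_exp.comp
    exact ((hC2.continuous.neg).sub ((continuous_norm.pow 2).div_const _))
  have hle1 : ∀ x, h x ≤ rexp (-b1 * ‖x‖ ^ 2) := by
    intro x
    apply Real.exp_le_exp.mpr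
    have e : -b1 * ‖x‖ ^ 2 = -(‖x‖ ^ 2 / (2 * σ2)) := by rw [hb1]; field_simp
    rw [e]
    linarith [hfnonneg x]
  have hle2 : ∀ x, rexp (-b2 * ‖x‖ ^ 2) ≤ h x := by
    intro x
    apply Real.exp_le_exp.mpr
    have := fupper x
    rw [hb2]
    have : -(L / 2 + 1 / (2 * σ2)) * ‖x‖ ^ 2 =
        -(L / 2 * ‖x‖ ^ 2) - ‖x‖ ^ 2 / (2 * σ2) := by field_simp; ring
    rw [this]
    have := fupper x
    linarith
  have hpos : ∀ x, 0 < h x := fun x => Real.exp_pos _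
  have hint : Integrable h := by
    apply (intg b1 hb1pos).mono hcont.aestronglyMeasurable
    refine Filter.Eventually.of_forall (fun x => ?_)
    rw [Real.norm_eq_abs, Real.norm_eq_abs, abs_of_pos (hpos x),
      abs_of_pos (Real.exp_pos _)]
    exact hle1 x
  have hup : ∫ x, h x ≤ (2 * π * σ2) ^ ((d : ℝ) / 2) := by
    have := integral_mono hint (intg b1 hb1pos) hle1
    rw [gauss b1 hb1pos] at this
    have heq : π / b1 = 2 * π * σ2 := by rw [hb1]; field_simp
    rwa [heq] at this
  have hlo : (1 - ε / 2) * (2 * π * σ2) ^ ((d : ℝ) / 2) ≤ ∫ x, h x := by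
    have hmono := integral_mono (intg b2 hb2pos) hint hle2
    rw [gauss b2 hb2pos] at hmono
    refine le_trans ?_ hmono
    -- need (1-ε/2) (2πσ2)^{d/2} ≤ (π/b2)^{d/2}
    set k : ℝ := 1 + ε / (2 * d) with hk
    have hkpos : (0:ℝ) < k := by positivity
    have heq : π / b2 = (2 * π * σ2) / k := by
      rw [hb2, hk, hσ2]
      field_simp
      ring
    rw [heq, Real.div_rpow (by positivity) hkpos.le]
    rw [le_div_iff₀ (by positivity)]
    have hA : (0:ℝ) < (2 * π * σ2) ^ ((d : ℝ) / 2) := by positivity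
    have key : (1 - ε / 2) * k ^ ((d : ℝ) / 2) ≤ 1 := by
      have h1 : k ^ ((d : ℝ) / 2) ≤ rexp (ε / 4) := by
        calc k ^ ((d : ℝ) / 2) ≤ (rexp (ε / (2 * d))) ^ ((d : ℝ) / 2) := by
              apply Real.rpow_le_rpow hkpos.le _ (by positivity)
              rw [hk]; linarith [Real.add_one_le_exp (ε / (2 * d))]
          _ = rexp (ε / (2 * d) * ((d : ℝ) / 2)) := (Real.exp_mul _ _).symm
          _ = rexp (ε / 4) := by congr 1; field_simp; ring
      have h2 : 1 - ε / 2 ≤ rexp (-(ε / 2)) := by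
        linarith [Real.add_one_le_exp (-(ε / 2))]
      have h3 : (0:ℝ) ≤ 1 - ε / 2 := by linarith
      calc (1 - ε / 2) * k ^ ((d : ℝ) / 2)
          ≤ rexp (-(ε / 2)) * rexp (ε / 4) := by
            apply mul_le_mul h2 h1 (by positivity) (Real.exp_pos _).le
        _ = rexp (-(ε / 4)) := by rw [← Real.exp_add]; ring_nf
        _ ≤ 1 := Real.exp_le_one_iff.mpr (by linarith)
    calc (1 - ε / 2) * (2 * π * σ2) ^ ((d : ℝ) / 2) * k ^ ((d : ℝ) / 2)
        = ((1 - ε / 2) * k ^ ((d : ℝ) / 2)) * (2 * π * σ2) ^ ((d : ℝ) / 2) := by ring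
      _ ≤ 1 * (2 * π * σ2) ^ ((d : ℝ) / 2) := by
          apply mul_le_mul_of_nonneg_right key hA.le
      _ = (2 * π * σ2) ^ ((d : ℝ) / 2) := one_mul _
  exact ⟨hlo, hup⟩
end
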